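/- If T is a square submatrix block of a Kolmogorov matrix C arising as the lower-right block in a block upper triangular decomposition [[C', A],[0, T]] where A is nonzero in every block row meeting it appropriately (i.e., for each column index j of the T-block there is leakage: the j-th column of C restricted to the T-block sums to a strictly negative number or T is irreducible with some column strictly dominated), then the spectral bound of T is strictly negative. -/

import Mathlib

open Matrix

/-- A matrix is irreducible if there is no nontrivial subset `S` of indices with
`A i j = 0` for all `i ∈ S`, `j ∉ S`. -/
def MatIrreducible {n : ℕ} (A : Matrix (Fin n) (Fin n) ℝ) : Prop :=
  ¬ ∃ S : Set (Fin n), S.Nonempty ∧ Sᶜ.Nonempty ∧ ∀ i ∈ S, ∀ j ∉ S, A i j = 0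

/-- If `T` is an irreducible matrix with nonnegative off-diagonal
entries, every column sum `≤ 0`, and at least one column sum strictly negative
(as for the lower-right block of a reducible Kolmogorov matrix with leakage), then
the spectral bound of `T` is strictly negative. -/
theorem transient_block_spectral_bound_neg (p : ℕ) (hp : 0 < p)
    (T : Matrix (Fin p) (Fin p) ℝ)
    (hoff : ∀ i j, i ≠ j → 0 ≤ T i j)
    (hcol : ∀ j, ∑ i, T i j ≤ 0)
    (hirr : MatIrreducible T)
    (hleak : ∃ j, ∑ i, T i j < 0) :
    ∀ s : ℝ,
      IsGreatest {x : ℝ | ∃ μ ∈ spectrum ℂ (T.map (fun r => (r : ℂ))), x = μ.re} s →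
      s < 0 := by
  intro s hs
  obtain ⟨⟨μ, hμ, rfl⟩, -⟩ := hs
  by_contra hcon
  push_neg at hcon
  -- `B` is `μ•1 - T` over ℂ
  set B : Matrix (Fin p) (Fin p) ℂ :=
    (algebraMap ℂ (Matrix (Fin p) (Fin p) ℂ)) μ - T.map (fun r => (r : ℂ)) with hB
  have hdet : (Bᵀ).det = 0 := by
    rw [Matrix.det_transpose]
    rw [spectrum.mem_iff] at hμ
    by_contra hd
    exact hμ ((Matrix.isUnit_iff_isUnit_det _).mpr (isUnit_iff_ne_zero.mpr hd))
  obtain ⟨v, hv0, hveq⟩ := Matrix.exists_mulVec_eq_zero_iff.mpr hdet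
  have heig : ∀ j, μ * v j = ∑ i, (T i j : ℂ) * v i := by
    intro j
    have h0 : ∑ i, B i j * v i = 0 := by
      have := congrFun hveq j
      simpa [Matrix.mulVec, dotProduct, Matrix.transpose_apply] using this
    have : ∑ i, B i j * v i
        = ∑ i, ((if i = j then μ else 0) - (T i j : ℂ)) * v i := by
      refine Finset.sum_congr rfl fun i _ => ?_
      simp [hB, Matrix.sub_apply, Matrix.algebraMap_matrix_apply, Matrix.map_apply]
    rw [this] at h0
    have hsplit : ∑ i, ((if i = j then μ else 0) - (T i j : ℂ)) * v i
        = μ * v j - ∑ i, (T i j : ℂ) * v i := by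
      simp only [sub_mul, Finset.sum_sub_distrib]
      congr 1
      simp [ite_mul, Finset.sum_ite_eq, Finset.mem_univ]
    rw [hsplit] at h0
    linear_combination h0
  -- maximum modulus
  obtain ⟨j0, -, hj0max⟩ := Finset.exists_max_image Finset.univ (fun i => ‖v i‖)
    ⟨⟨0, hp⟩, Finset.mem_univ _⟩
  set M : ℝ := ‖v j0‖ with hMdef
  have hM : ∀ i, ‖v i‖ ≤ M := fun i => hj0max i (Finset.mem_univ i)
  have hMpos : 0 < M := by
    obtain ⟨i, hi⟩ := Function.ne_iff.mp hv0
    exact lt_of_lt_of_le (norm_pos_iff.mpr hi) (hM i)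
  -- key equality analysis at any index of maximal modulus
  have key : ∀ j, ‖v j‖ = M →
      (∑ i, T i j = 0) ∧ ∀ i, i ≠ j → T i j ≠ 0 → ‖v i‖ = M := by
    intro j hj
    have hsum : ∑ i ∈ Finset.univ.erase j, (T i j : ℂ) * v i
        = (μ - (T j j : ℂ)) * v j := by
      have h2 : ∑ i ∈ Finset.univ.erase j, (T i j : ℂ) * v i + (T j j : ℂ) * v j
          = ∑ i, (T i j : ℂ) * v i :=
        Finset.sum_erase_add Finset.univ (fun i => (T i j : ℂ) * v i) (Finset.mem_univ j)
      linear_combination h2 - heig j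
    have hb1 : ‖μ - (T j j : ℂ)‖ * M ≤ ∑ i ∈ Finset.univ.erase j, T i j * ‖v i‖ := by
      calc ‖μ - (T j j : ℂ)‖ * M = ‖(μ - (T j j : ℂ)) * v j‖ := by
            rw [norm_mul, hj]
        _ = ‖∑ i ∈ Finset.univ.erase j, (T i j : ℂ) * v i‖ := by rw [hsum]
        _ ≤ ∑ i ∈ Finset.univ.erase j, ‖(T i j : ℂ) * v i‖ := norm_sum_le _ _
        _ = ∑ i ∈ Finset.univ.erase j, T i j * ‖v i‖ := by
            refine Finset.sum_congr rfl fun i hi => ?_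
            rw [norm_mul, Complex.norm_real, Real.norm_eq_abs,
              abs_of_nonneg (hoff i j (Finset.ne_of_mem_erase hi))]
    have hb2 : ∑ i ∈ Finset.univ.erase j, T i j * ‖v i‖
        ≤ ∑ i ∈ Finset.univ.erase j, T i j * M :=
      Finset.sum_le_sum fun i hi =>
        mul_le_mul_of_nonneg_left (hM i) (hoff i j (Finset.ne_of_mem_erase hi))
    have hE : ∑ i ∈ Finset.univ.erase j, T i j + T j j = ∑ i, T i j :=
      Finset.sum_erase_add Finset.univ (fun i => T i j) (Finset.mem_univ j)
    have hb3 : ∑ i ∈ Finset.univ.erase j, T i j ≤ - T j j := by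
      have := hcol j
      linarith
    have hlow : - T j j ≤ ‖μ - (T j j : ℂ)‖ := by
      have h1 : (μ - (T j j : ℂ)).re ≤ ‖μ - (T j j : ℂ)‖ := by
        simpa using Complex.re_le_norm (μ - (T j j : ℂ))
      have h2 : (μ - (T j j : ℂ)).re = μ.re - T j j := by simp
      linarith
    -- chain of inequalities; all must be equalities
    have hchain1 : (- T j j) * M ≤ ∑ i ∈ Finset.univ.erase j, T i j * ‖v i‖ := by
      calc (- T j j) * M ≤ ‖μ - (T j j : ℂ)‖ * M :=
            mul_le_mul_of_nonneg_right hlow hMpos.le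
        _ ≤ _ := hb1
    have hchain2 : ∑ i ∈ Finset.univ.erase j, T i j * M ≤ (- T j j) * M := by
      rw [← Finset.sum_mul]
      exact mul_le_mul_of_nonneg_right hb3 hMpos.le
    have heqsum : ∑ i ∈ Finset.univ.erase j, T i j * ‖v i‖
        = ∑ i ∈ Finset.univ.erase j, T i j * M := le_antisymm hb2 (by linarith)
    have heq3 : ∑ i ∈ Finset.univ.erase j, T i j = - T j j := by
      have h1 : (- T j j) * M ≤ (∑ i ∈ Finset.univ.erase j, T i j) * M := by
        rw [Finset.sum_mul]; linarith
      have h2 : - T j j ≤ ∑ i ∈ Finset.univ.erase j, T i j :=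
        le_of_mul_le_mul_right h1 hMpos
      linarith
    constructor
    · linarith
    · intro i hij hTij
      have hmem : i ∈ Finset.univ.erase j := Finset.mem_erase.mpr ⟨hij, Finset.mem_univ i⟩
      have := (Finset.sum_eq_sum_iff_of_le
        (fun i hi => mul_le_mul_of_nonneg_left (hM i)
          (hoff i j (Finset.ne_of_mem_erase hi)))).mp heqsum i hmem
      have hpos : 0 < T i j := lt_of_le_of_ne (hoff i j hij) (Ne.symm hTij)
      exact mul_left_cancel₀ (ne_of_gt hpos) this
  -- irreducibility forces all moduli equal to M
  have hall : ∀ i, ‖v i‖ = M := by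
    by_contra hno
    push_neg at hno
    obtain ⟨i0, hi0⟩ := hno
    refine hirr ⟨{i | ‖v i‖ ≠ M}, ⟨i0, hi0⟩, ⟨j0, by simp [hMdef]⟩, ?_⟩
    intro a ha b hb
    have hb' : ‖v b‖ = M := not_not.mp hb
    have hab : a ≠ b := fun h => ha (h ▸ hb')
    by_contra hTab
    exact ha ((key b hb').2 a hab hTab)
  -- leakage column gives the contradiction
  obtain ⟨j, hj⟩ := hleak
  have := (key j (hall j)).1
  linarith
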